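/- Assume the DCBO parameters satisfy condition (B1): inf_{α>0} E[|1 − γ¹ + γ²ζ|^α] < 1 for ζ ~ N(0,1), and γ̄¹ ≥ γ̄². Then for almost every sample point ω ∈ Ω, at least one of the following holds: (a) the best objective value f(p_n(ω)) is strictly decreased infinitely often (there are infinitely many n with f(p_{n+1}(ω)) < f(p_n(ω))); or (b) the sample path converges, i.e. there exists a vector x_∞(ω) ∈ S such that ‖x_n^i(ω) − x_∞(ω)‖ → 0 as n → ∞ for every agent i ∈ {1,…,N}. -/

import Mathlib

open MeasureTheory ProbabilityTheory Filter Topology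

noncomputable section

/-- `Euc d` is the `d`-dimensional Euclidean space `ℝ^d`. -/
abbrev Euc (d : ℕ) := EuclideanSpace ℝ (Fin d)

/-- Entrywise (Hadamard) product on `ℝ^d`. -/
def hadamard {d : ℕ} (u v : Euc d) : Euc d := WithLp.toLp 2 (fun k => u k * v k)

/-- The anisotropic DCBO update map `F₁(x,y,η) = x + γ¹(y−x) + γ²(y−x)⊙η`. -/
def F1 {d : ℕ} (γ1 γ2 : ℝ) (x y η : Euc d) : Euc d :=
  x + γ1 • (y - x) + γ2 • hadamard (y - x) η

/-- The isotropic DCBO update map `F₂(x,y,η) = x + γ̄¹(y−x) + γ̄²‖y−x‖η/√d`. -/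
def F2 {d : ℕ} (γ1 γ2 : ℝ) (x y η : Euc d) : Euc d :=
  x + γ1 • (y - x) + ((γ2 * ‖y - x‖) / Real.sqrt d) • η

/-- The standard Gaussian measure `N_d(0, I_d)` on `ℝ^d`. -/
def stdGaussian (d : ℕ) : Measure (Euc d) :=
  (Measure.pi fun _ : Fin d => gaussianReal 0 1).map (EuclideanSpace.equiv (Fin d) ℝ).symm


open scoped ENNReal NNReal

instance stdGaussian_prob (d : ℕ) : IsProbabilityMeasure (stdGaussian d) := by
  rw [_root_.stdGaussian]
  exact Measure.isProbabilityMeasure_map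
    ((EuclideanSpace.equiv (Fin d) ℝ).symm.continuous.measurable).aemeasurable

lemma measurable_eval_euc {d : ℕ} (k : Fin d) : Measurable (fun v : Euc d => v k) :=
  by fun_prop

lemma map_eval_pi {ι : Type*} [Fintype ι] {α : ι → Type*} [∀ i, MeasurableSpace (α i)]
    (μ : ∀ i, Measure (α i)) [∀ i, IsProbabilityMeasure (μ i)] (k : ι) :
    (Measure.pi μ).map (Function.eval k) = μ k := by
  classical
  ext s hs
  rw [Measure.map_apply (measurable_pi_apply k) hs, Set.eval_preimage, Measure.pi_pi]
  rw [Fintype.prod_eq_single k]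
  · simp
  · intro j hj
    simp [Function.update_of_ne hj]

lemma stdGaussian_map_eval {d : ℕ} (k : Fin d) :
    (stdGaussian d).map (fun v => v k) = gaussianReal 0 1 := by
  rw [_root_.stdGaussian, Measure.map_map (measurable_eval_euc k)
    (EuclideanSpace.equiv (Fin d) ℝ).symm.continuous.measurable]
  exact map_eval_pi (fun _ : Fin d => gaussianReal 0 1) k

lemma lintegral_stdGaussian_eval {d : ℕ} (k : Fin d) (ψ : ℝ → ℝ≥0∞) (hψ : Measurable ψ) :
    ∫⁻ v, ψ (v k) ∂(stdGaussian d) = ∫⁻ t, ψ t ∂(gaussianReal 0 1) := by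
  rw [← stdGaussian_map_eval k, lintegral_map hψ (measurable_eval_euc k)]

lemma aux_prod_tendsto_zero
    {Ω : Type*} [MeasurableSpace Ω] (P : Measure Ω) [IsProbabilityMeasure P]
    {d N : ℕ}
    (η : ℕ → Fin N → Ω → Euc d)
    (hηmeas : ∀ n i, Measurable (η n i))
    (hηdist : ∀ n i, Measure.map (η n i) P = stdGaussian d)
    (hηindep : iIndepFun (fun (q : ℕ × Fin N) ω => η q.1 q.2 ω) P)
    (i : Fin N) (n₀ : ℕ)
    (φ : Euc d → ℝ≥0∞) (hφ : Measurable φ)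
    (ρ : ℝ≥0∞) (hρ : ρ < 1)
    (hint : ∫⁻ v, φ v ∂(stdGaussian d) ≤ ρ) :
    ∀ᵐ ω ∂P, Tendsto (fun n => ∏ m ∈ Finset.Ico n₀ n, φ (η m i ω)) atTop (𝓝 0) := by
  classical
  -- the composed family
  set g : ℕ × Fin N → Ω → ℝ≥0∞ := fun q ω => φ (η q.1 q.2 ω) with hg
  have hgmeas : ∀ q, Measurable (g q) := fun q => hφ.comp (hηmeas q.1 q.2)
  have hgindep : iIndepFun g P := by
    have := hηindep.comp (fun _ : ℕ × Fin N => φ) (fun _ => hφ)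
    exact this
  have hgint : ∀ q, ∫⁻ ω, g q ω ∂P ≤ ρ := by
    intro q
    have : ∫⁻ ω, φ (η q.1 q.2 ω) ∂P = ∫⁻ v, φ v ∂(stdGaussian d) := by
      rw [← hηdist q.1 q.2, lintegral_map hφ (hηmeas q.1 q.2)]
    rw [hg]; simpa [this] using hint
  -- product random variables
  set Z : ℕ → Ω → ℝ≥0∞ := fun n ω => ∏ m ∈ Finset.Ico n₀ n, g (m, i) ω with hZ
  have hZmeas : ∀ n, Measurable (Z n) := fun n =>
    Finset.measurable_prod _ (fun m _ => hgmeas (m, i))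
  -- expectation bound by induction
  have hZint : ∀ j : ℕ, ∫⁻ ω, Z (n₀ + j) ω ∂P ≤ ρ ^ j := by
    intro j
    induction j with
    | zero => simp [hZ]
    | succ j ih =>
      have hle : n₀ ≤ n₀ + j := Nat.le_add_right _ _
      have hsplit : ∀ ω, Z (n₀ + (j + 1)) ω = Z (n₀ + j) ω * g (n₀ + j, i) ω := by
        intro ω
        rw [hZ]
        simp only [← Nat.add_assoc]
        rw [Finset.prod_Ico_succ_top hle]
      -- independence of the partial product and the next factor
      have hnotmem : ((n₀ + j : ℕ), i) ∉ (Finset.Ico n₀ (n₀ + j)).map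
          ⟨fun m => (m, i), fun a b h => by simpa using congrArg Prod.fst h⟩ := by
        simp only [Finset.mem_map, Function.Embedding.coeFn_mk, Finset.mem_Ico]
        rintro ⟨m, ⟨-, hm2⟩, hm⟩
        have : m = n₀ + j := congrArg Prod.fst hm
        omega
      have hindep := hgindep.indepFun_finsetProd_of_notMem hgmeas hnotmem
      have hprodeq : (∏ q ∈ (Finset.Ico n₀ (n₀ + j)).map
          ⟨fun m => (m, i), fun a b h => by simpa using congrArg Prod.fst h⟩, g q)
          = fun ω => Z (n₀ + j) ω := by
        funext ω
        rw [Finset.prod_apply, Finset.prod_map, hZ]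
        rfl
      rw [hprodeq] at hindep
      have hmul := lintegral_mul_eq_lintegral_mul_lintegral_of_indepFun
        (hZmeas (n₀ + j)) (hgmeas (n₀ + j, i)) hindep
      calc ∫⁻ ω, Z (n₀ + (j + 1)) ω ∂P
          = ∫⁻ ω, (fun ω' => Z (n₀ + j) ω') ω * (fun ω' => g (n₀ + j, i) ω') ω ∂P := by
            simp_rw [hsplit]
        _ = (∫⁻ ω, Z (n₀ + j) ω ∂P) * ∫⁻ ω, g (n₀ + j, i) ω ∂P := hmul
        _ ≤ ρ ^ j * ρ := mul_le_mul' ih (hgint _)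
        _ = ρ ^ (j + 1) := (pow_succ ρ j).symm
  -- the sum of expectations is finite
  have hsum : ∫⁻ ω, ∑' j : ℕ, Z (n₀ + j) ω ∂P ≠ ⊤ := by
    rw [lintegral_tsum (fun j => (hZmeas (n₀ + j)).aemeasurable)]
    have hb : ∑' j : ℕ, ∫⁻ ω, Z (n₀ + j) ω ∂P ≤ ∑' j : ℕ, ρ ^ j :=
      ENNReal.tsum_le_tsum hZint
    have : ∑' j : ℕ, ρ ^ j = (1 - ρ)⁻¹ := ENNReal.tsum_geometric ρ
    have hfin : (1 - ρ)⁻¹ ≠ ⊤ := by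
      rw [ENNReal.inv_ne_top]
      intro h0
      exact absurd (tsub_eq_zero_iff_le.mp h0) (not_le.mpr hρ)
    exact ne_top_of_le_ne_top (this ▸ hfin) hb
  have hae : ∀ᵐ ω ∂P, ∑' j : ℕ, Z (n₀ + j) ω < ⊤ :=
    ae_lt_top (Measurable.ennreal_tsum (fun j => hZmeas (n₀ + j))) hsum
  filter_upwards [hae] with ω hω
  have h1 : Tendsto (fun j => Z (n₀ + j) ω) atTop (𝓝 0) :=
    ENNReal.tendsto_atTop_zero_of_tsum_ne_top hω.ne
  have h2 : Tendsto (fun n => Z (n₀ + (n - n₀)) ω) atTop (𝓝 0) :=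
    h1.comp (tendsto_sub_atTop_nat n₀)
  have h3 : (fun n => Z n ω) =ᶠ[atTop] fun n => Z (n₀ + (n - n₀)) ω := by
    filter_upwards [eventually_ge_atTop n₀] with n hn
    rw [Nat.add_sub_cancel' hn]
  exact Tendsto.congr' h3.symm h2

lemma real_prod_tendsto_zero {c : ℕ → ℝ} (hc : ∀ m, 0 ≤ c m) {α : ℝ} (hα : 0 < α) (n₁ : ℕ)
    (h : Tendsto (fun n => ∏ m ∈ Finset.Ico n₁ n, ENNReal.ofReal (c m ^ α)) atTop (𝓝 0)) :
    Tendsto (fun n => ∏ m ∈ Finset.Ico n₁ n, c m) atTop (𝓝 0) := by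
  have hQ : ∀ n, (0:ℝ) ≤ ∏ m ∈ Finset.Ico n₁ n, c m := fun n =>
    Finset.prod_nonneg fun m _ => hc m
  have heq : ∀ n, ∏ m ∈ Finset.Ico n₁ n, ENNReal.ofReal (c m ^ α)
      = ENNReal.ofReal ((∏ m ∈ Finset.Ico n₁ n, c m) ^ α) := by
    intro n
    rw [← Real.finset_prod_rpow _ _ (fun m _ => hc m) α,
      ENNReal.ofReal_prod_of_nonneg (fun m _ => Real.rpow_nonneg (hc m) α)]
  simp_rw [heq] at h
  have h2' := (ENNReal.tendsto_toReal (a := 0) (by simp)).comp h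
  have h2 : Tendsto (fun n => (∏ m ∈ Finset.Ico n₁ n, c m) ^ α) atTop (𝓝 0) := by
    have := h2'.congr (fun n => ENNReal.toReal_ofReal (Real.rpow_nonneg (hQ n) α))
    simpa using this
  have h3 : Tendsto (fun z : ℝ => z ^ α⁻¹) (𝓝 0) (𝓝 0) := by
    have hcont := Real.continuousAt_rpow_const 0 α⁻¹ (Or.inr (inv_nonneg.mpr hα.le))
    have h0 : (0:ℝ) ^ α⁻¹ = 0 := Real.zero_rpow (inv_ne_zero hα.ne')
    simpa [ContinuousAt, h0] using hcont
  have h4 := h3.comp h2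
  have heq2 : (fun n => ((∏ m ∈ Finset.Ico n₁ n, c m) ^ α) ^ α⁻¹)
      = fun n => ∏ m ∈ Finset.Ico n₁ n, c m := by
    funext n; exact Real.rpow_rpow_inv (hQ n) hα.ne'
  rwa [Function.comp_def, heq2] at h4

lemma antitone_nat_eventually_constant (g : ℕ → ℕ) (hg : ∀ n, g (n + 1) ≤ g n) :
    ∃ n₁, ∀ n, n₁ ≤ n → g n = g n₁ := by
  have hanti : Antitone g := antitone_nat_of_succ_le hg
  obtain ⟨n₁, hn₁⟩ := Nat.sInf_mem (Set.range_nonempty g)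
  refine ⟨n₁, fun n hn => le_antisymm (hanti hn) ?_⟩
  rw [hn₁]
  exact Nat.sInf_le ⟨n, rfl⟩

lemma hadamard_zero {d : ℕ} (e : Euc d) : hadamard (0 : Euc d) e = 0 := by
  ext k
  simp [hadamard]

lemma F1_fix {d : ℕ} (γ1 γ2 : ℝ) (x e : Euc d) : F1 γ1 γ2 x x e = x := by
  simp [F1, hadamard_zero]

lemma F2_fix {d : ℕ} (γ1 γ2 : ℝ) (x e : Euc d) : F2 γ1 γ2 x x e = x := by
  simp [F2]

open Set in
lemma integrable_abs_rpow_mul_exp {α : ℝ} (hα : 0 ≤ α) :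
    Integrable (fun x : ℝ => |x| ^ α * Real.exp (-(1/2) * x ^ 2)) := by
  have hbase := integrable_rpow_mul_exp_neg_mul_sq (b := 1/2) (by norm_num) (s := α)
    (by linarith)
  have int_Ioi : IntegrableOn (fun x : ℝ => |x| ^ α * Real.exp (-(1/2) * x ^ 2)) (Ioi 0) := by
    refine hbase.integrableOn.congr_fun (fun x hx => ?_) measurableSet_Ioi
    rw [abs_of_pos hx]
  have int_Iic : IntegrableOn (fun x : ℝ => |x| ^ α * Real.exp (-(1/2) * x ^ 2)) (Iic 0) := by
    rw [← Measure.map_neg_eq_self (volume : Measure ℝ)]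
    let m : MeasurableEmbedding fun x : ℝ => -x := (Homeomorph.neg ℝ).measurableEmbedding
    rw [m.integrableOn_map_iff]
    simp_rw [Function.comp_def, abs_neg, neg_sq, Set.neg_preimage, neg_Iic, neg_zero]
    exact (integrableOn_Ici_iff_integrableOn_Ioi).mpr int_Ioi
  have := int_Iic.union int_Ioi
  rw [Iic_union_Ioi] at this
  exact integrableOn_univ.mp (by simpa using this)

lemma continuous_abs_rpow (a b α : ℝ) (hα : 0 ≤ α) :
    Continuous (fun t : ℝ => |a + b * t| ^ α) := by
  have h1 : Continuous fun z : ℝ => z ^ α :=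
    continuous_iff_continuousAt.mpr fun z => Real.continuousAt_rpow_const z α (Or.inr hα)
  exact h1.comp ((continuous_const.add (continuous_const.mul continuous_id)).abs)

lemma gaussianPDFReal_zero_one (t : ℝ) :
    gaussianPDFReal 0 1 t = (Real.sqrt (2 * Real.pi))⁻¹ * Real.exp (-(1/2) * t ^ 2) := by
  rw [gaussianPDFReal]
  simp only [NNReal.coe_one, mul_one, sub_zero]
  congr 1
  ring_nf

lemma integrable_abs_rpow_gaussian (a b : ℝ) {α : ℝ} (hα : 0 < α) :
    Integrable (fun t => |a + b * t| ^ α) (gaussianReal 0 1) := by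
  rw [gaussianReal_of_var_ne_zero 0 one_ne_zero,
    integrable_withDensity_iff (measurable_gaussianPDF 0 1)
      (Eventually.of_forall fun x => ENNReal.ofReal_lt_top)]
  have htoReal : ∀ t, ((gaussianPDF 0 1 t).toReal) = gaussianPDFReal 0 1 t := fun t =>
    ENNReal.toReal_ofReal (gaussianPDFReal_nonneg 0 1 t)
  set C : ℝ := (2 * (|a| + |b| + 1)) ^ α with hC
  have hCpos : 0 < C := Real.rpow_pos_of_pos (by positivity) α
  set c0 : ℝ := (Real.sqrt (2 * Real.pi))⁻¹ with hc0
  have hc0pos : 0 < c0 := by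
    rw [hc0]
    positivity
  have hbound : ∀ t : ℝ, ‖|a + b * t| ^ α * (gaussianPDF 0 1 t).toReal‖
      ≤ C * gaussianPDFReal 0 1 t + (C * c0) * (|t| ^ α * Real.exp (-(1/2) * t ^ 2)) := by
    intro t
    rw [htoReal]
    have hpdf0 : 0 ≤ gaussianPDFReal 0 1 t := gaussianPDFReal_nonneg 0 1 t
    rw [Real.norm_eq_abs, abs_of_nonneg (by positivity)]
    have h1 : |a + b * t| ≤ (2 * (|a| + |b| + 1)) * max 1 |t| := by
      have : |a + b * t| ≤ |a| + |b| * |t| := by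
        calc |a + b * t| ≤ |a| + |b * t| := abs_add_le _ _
        _ = |a| + |b| * |t| := by rw [abs_mul]
      have h1a : |a| ≤ (|a| + |b| + 1) * max 1 |t| := by
        nlinarith [le_max_left (1:ℝ) |t|, abs_nonneg a, abs_nonneg b, abs_nonneg t,
          le_max_right (1:ℝ) |t|]
      have h1b : |b| * |t| ≤ (|a| + |b| + 1) * max 1 |t| := by
        nlinarith [le_max_right (1:ℝ) |t|, abs_nonneg a, abs_nonneg b, abs_nonneg t,
          le_max_left (1:ℝ) |t|]
      linarith
    have h2 : |a + b * t| ^ α ≤ C * (max 1 |t|) ^ α := by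
      have := Real.rpow_le_rpow (abs_nonneg _) h1 hα.le
      rwa [Real.mul_rpow (by positivity) (le_max_of_le_left zero_le_one), ← hC] at this
    have h3 : (max 1 |t|) ^ α ≤ 1 + |t| ^ α := by
      rcases max_cases 1 |t| with ⟨hm, _⟩ | ⟨hm, _⟩
      · rw [hm, Real.one_rpow]
        have : 0 ≤ |t| ^ α := Real.rpow_nonneg (abs_nonneg t) α
        linarith
      · rw [hm]
        have : (0:ℝ) ≤ 1 := zero_le_one
        have := Real.rpow_nonneg (abs_nonneg t) α
        linarith [Real.rpow_nonneg (abs_nonneg t) α]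
    have h4 : |a + b * t| ^ α ≤ C + C * |t| ^ α := by
      calc |a + b * t| ^ α ≤ C * (max 1 |t|) ^ α := h2
      _ ≤ C * (1 + |t| ^ α) := by
          exact mul_le_mul_of_nonneg_left h3 hCpos.le
      _ = C + C * |t| ^ α := by ring
    have h5 : gaussianPDFReal 0 1 t ≤ c0 * Real.exp (-(1/2) * t ^ 2) := by
      rw [gaussianPDFReal_zero_one]
    calc |a + b * t| ^ α * gaussianPDFReal 0 1 t
        ≤ (C + C * |t| ^ α) * gaussianPDFReal 0 1 t := by
          exact mul_le_mul_of_nonneg_right h4 hpdf0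
      _ = C * gaussianPDFReal 0 1 t + (C * |t| ^ α) * gaussianPDFReal 0 1 t := by ring
      _ ≤ C * gaussianPDFReal 0 1 t + (C * c0) * (|t| ^ α * Real.exp (-(1/2) * t ^ 2)) := by
          have : (C * |t| ^ α) * gaussianPDFReal 0 1 t
              ≤ (C * |t| ^ α) * (c0 * Real.exp (-(1/2) * t ^ 2)) := by
            refine mul_le_mul_of_nonneg_left h5 ?_
            positivity
          nlinarith [this]
  refine Integrable.mono' ?_ ?_ (Eventually.of_forall hbound)
  · exact ((integrable_gaussianPDFReal 0 1).const_mul C).add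
      ((integrable_abs_rpow_mul_exp hα.le).const_mul (C * c0))
  · exact ((continuous_abs_rpow a b α hα.le).measurable.mul
      ((measurable_gaussianPDF 0 1).ennreal_toReal)).aestronglyMeasurable

lemma gaussianReal_map_neg : (gaussianReal 0 1).map (fun t => -t) = gaussianReal 0 1 := by
  have h := gaussianReal_map_const_mul (μ := 0) (v := 1) (-1)
  have h2 : (fun x : ℝ => (-1) * x) = fun x => -x := by funext x; ring
  rw [h2] at h
  rw [h]
  congr 1
  · ring
  · ext
    norm_num

lemma exists_alpha_lt_one (γ1 γ2 : ℝ)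
    (h : sInf {r : ℝ | ∃ α : ℝ, 0 < α ∧
        r = ∫ t, |1 - γ1 + γ2 * t| ^ α ∂(gaussianReal 0 1)} < 1) :
    ∃ α : ℝ, 0 < α ∧ ∫ t, |1 - γ1 + γ2 * t| ^ α ∂(gaussianReal 0 1) < 1 := by
  by_contra hcon
  push_neg at hcon
  have hne : {r : ℝ | ∃ α : ℝ, 0 < α ∧
      r = ∫ t, |1 - γ1 + γ2 * t| ^ α ∂(gaussianReal 0 1)}.Nonempty :=
    ⟨_, 1, one_pos, rfl⟩
  have hlb : ∀ r ∈ {r : ℝ | ∃ α : ℝ, 0 < α ∧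
      r = ∫ t, |1 - γ1 + γ2 * t| ^ α ∂(gaussianReal 0 1)}, (1:ℝ) ≤ r := by
    rintro r ⟨α, hα, rfl⟩
    exact hcon α hα
  exact absurd (le_csInf hne hlb) (not_le.mpr h)

lemma F1_lintegral_eq {d : ℕ} (k : Fin d) (γ1 γ2 : ℝ) {α : ℝ} (hα : 0 < α) :
    ∫⁻ v, ENNReal.ofReal (|1 - γ1 - γ2 * (v k)| ^ α) ∂(stdGaussian d)
      = ENNReal.ofReal (∫ t, |1 - γ1 + γ2 * t| ^ α ∂(gaussianReal 0 1)) := by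
  have hψmeas : Measurable fun t : ℝ => ENNReal.ofReal (|1 - γ1 - γ2 * t| ^ α) := by
    have := continuous_abs_rpow (1 - γ1) (-γ2) α hα.le
    have h2 : (fun t : ℝ => |1 - γ1 - γ2 * t| ^ α) = fun t => |1 - γ1 + (-γ2) * t| ^ α := by
      funext t; congr 1; ring_nf
    exact ENNReal.measurable_ofReal.comp (by rw [h2]; exact this.measurable)
  rw [lintegral_stdGaussian_eval k _ hψmeas]
  have hsym : ∫⁻ t, ENNReal.ofReal (|1 - γ1 - γ2 * t| ^ α) ∂(gaussianReal 0 1)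
      = ∫⁻ t, ENNReal.ofReal (|1 - γ1 + γ2 * t| ^ α) ∂(gaussianReal 0 1) := by
    conv_lhs => rw [← _root_.gaussianReal_map_neg]
    rw [lintegral_map hψmeas measurable_neg]
    congr 1
    funext t
    congr 2
    ring_nf
  rw [hsym]
  rw [← ofReal_integral_eq_lintegral_ofReal
    (integrable_abs_rpow_gaussian (1 - γ1) γ2 hα)
    (Eventually.of_forall fun t => Real.rpow_nonneg (abs_nonneg _) α)]

open Set in
lemma integral_Ioi_sq_exp :
    ∫ x in Set.Ioi (0:ℝ), x ^ 2 * Real.exp (-(1/2) * x ^ 2)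
      = ∫ x in Set.Ioi (0:ℝ), Real.exp (-(1/2) * x ^ 2) := by
  have hE : Integrable (fun x : ℝ => Real.exp (-(1/2) * x ^ 2)) :=
    integrable_exp_neg_mul_sq (by norm_num)
  have hsq : Integrable (fun x : ℝ => x ^ 2 * Real.exp (-(1/2) * x ^ 2)) := by
    have := integrable_rpow_mul_exp_neg_mul_sq (b := 1/2) (by norm_num) (s := 2)
      (by norm_num)
    refine this.congr ?_
    refine Eventually.of_forall fun x => ?_
    norm_num [show ((2:ℝ) = ((2:ℕ):ℝ)) by norm_num, Real.rpow_natCast]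
  have hg' : ∀ x ∈ Set.Ioi (0:ℝ), HasDerivAt (fun x : ℝ => -x * Real.exp (-(1/2) * x ^ 2))
      ((x ^ 2 - 1) * Real.exp (-(1/2) * x ^ 2)) x := by
    intro x _
    have h1 : HasDerivAt (fun x : ℝ => -(1/2) * x ^ 2) (-(1/2) * (2 * x ^ 1)) x :=
      (hasDerivAt_pow 2 x).const_mul (-(1/2))
    have h2 := h1.exp
    have h3 : HasDerivAt (fun x : ℝ => -x) (-1) x := (hasDerivAt_id x).neg
    have h4 : HasDerivAt (fun y : ℝ => -y * Real.exp (-(1/2) * y ^ 2)) _ x := h3.mul h2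
    convert h4 using 1
    ring
  have htend : Tendsto (fun x : ℝ => -x * Real.exp (-(1/2) * x ^ 2)) atTop (𝓝 0) := by
    have hlo := rpow_mul_exp_neg_mul_sq_isLittleO_exp_neg (b := 1/2) (by norm_num) 1
    have hexp0 : Tendsto (fun x : ℝ => Real.exp (-(1/2) * x)) atTop (𝓝 0) := by
      have h1 : Tendsto (fun x : ℝ => (1/2) * x) atTop atTop :=
        Tendsto.const_mul_atTop (by norm_num) tendsto_id
      have := Real.tendsto_exp_neg_atTop_nhds_zero.comp h1
      refine this.congr fun x => ?_
      simp only [Function.comp_apply]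
      ring_nf
    have h0 : Tendsto (fun x : ℝ => x ^ (1:ℝ) * Real.exp (-(1/2) * x ^ 2)) atTop (𝓝 0) :=
      hlo.isBigO.trans_tendsto hexp0
    have h1 : Tendsto (fun x : ℝ => x * Real.exp (-(1/2) * x ^ 2)) atTop (𝓝 0) := by
      refine h0.congr fun x => ?_
      rw [Real.rpow_one]
    have := h1.neg
    rw [neg_zero] at this
    refine this.congr fun x => ?_
    ring
  have hint : IntegrableOn (fun x : ℝ => (x ^ 2 - 1) * Real.exp (-(1/2) * x ^ 2))
      (Set.Ioi 0) := by
    refine ((hsq.sub hE).integrableOn).congr_fun (fun x _ => ?_) measurableSet_Ioi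
    simp only [Pi.sub_apply]
    ring
  have hcont : ContinuousWithinAt (fun x : ℝ => -x * Real.exp (-(1/2) * x ^ 2))
      (Set.Ici 0) 0 := by
    apply Continuous.continuousWithinAt
    continuity
  have h := integral_Ioi_of_hasDerivAt_of_tendsto hcont hg' hint htend
  simp only [neg_zero, zero_mul, sub_zero, mul_zero, neg_mul, zero_pow] at h
  have hzero : ∫ x in Set.Ioi (0:ℝ), (x ^ 2 - 1) * Real.exp (-(1/2) * x ^ 2) = 0 := by
    simpa using h
  have hsub : ∫ x in Set.Ioi (0:ℝ), (x ^ 2 - 1) * Real.exp (-(1/2) * x ^ 2)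
      = (∫ x in Set.Ioi (0:ℝ), x ^ 2 * Real.exp (-(1/2) * x ^ 2))
        - ∫ x in Set.Ioi (0:ℝ), Real.exp (-(1/2) * x ^ 2) := by
    rw [← integral_sub hsq.integrableOn hE.integrableOn]
    congr 1
    funext x
    ring
  rw [hsub] at hzero
  linarith

lemma integral_sq_gaussianReal : ∫ t, t ^ 2 ∂(gaussianReal 0 1) = 1 := by
  have hrw : gaussianReal 0 1
      = (volume : Measure ℝ).withDensity fun x => ((gaussianPDFReal 0 1 x).toNNReal : ℝ≥0∞) :=
    gaussianReal_of_var_ne_zero 0 one_ne_zero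
  rw [hrw, integral_withDensity_eq_integral_smul
    ((measurable_gaussianPDFReal 0 1).real_toNNReal) (fun t => t ^ 2)]
  have hptw : ∀ x : ℝ, (gaussianPDFReal 0 1 x).toNNReal • x ^ 2
      = (Real.sqrt (2 * Real.pi))⁻¹ * (x ^ 2 * Real.exp (-(1/2) * x ^ 2)) := by
    intro x
    rw [NNReal.smul_def, smul_eq_mul, Real.coe_toNNReal _ (gaussianPDFReal_nonneg 0 1 x),
      gaussianPDFReal_zero_one]
    ring
  simp_rw [hptw]
  rw [integral_const_mul]
  have habs : ∫ x : ℝ, x ^ 2 * Real.exp (-(1/2) * x ^ 2)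
      = 2 * ∫ x in Set.Ioi (0:ℝ), x ^ 2 * Real.exp (-(1/2) * x ^ 2) := by
    have := integral_comp_abs (f := fun t : ℝ => t ^ 2 * Real.exp (-(1/2) * t ^ 2))
    rw [← this]
    congr 1
    funext x
    rw [sq_abs]
  rw [habs, integral_Ioi_sq_exp, integral_gaussian_Ioi]
  rw [show Real.pi / (1/2) = 2 * Real.pi by ring]
  rw [mul_div_cancel₀ _ (two_ne_zero)]
  rw [inv_mul_cancel₀]
  exact Real.sqrt_ne_zero'.mpr (by positivity)

lemma integrable_sq_gaussianReal : Integrable (fun t : ℝ => t ^ 2) (gaussianReal 0 1) := by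
  rw [gaussianReal_of_var_ne_zero 0 one_ne_zero,
    integrable_withDensity_iff (measurable_gaussianPDF 0 1)
      (Eventually.of_forall fun x => ENNReal.ofReal_lt_top)]
  have hsq : Integrable (fun x : ℝ => x ^ 2 * Real.exp (-(1/2) * x ^ 2)) := by
    have := integrable_rpow_mul_exp_neg_mul_sq (b := 1/2) (by norm_num) (s := 2)
      (by norm_num)
    refine this.congr ?_
    refine Eventually.of_forall fun x => ?_
    norm_num [show ((2:ℝ) = ((2:ℕ):ℝ)) by norm_num, Real.rpow_natCast]
  refine (hsq.const_mul ((Real.sqrt (2 * Real.pi))⁻¹)).congr ?_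
  refine Eventually.of_forall fun x => ?_
  simp only [gaussianPDF]
  rw [ENNReal.toReal_ofReal (gaussianPDFReal_nonneg 0 1 x), gaussianPDFReal_zero_one]
  ring

lemma integral_eval_sq_stdGaussian {d : ℕ} (k : Fin d) :
    ∫ v, (v k) ^ 2 ∂(stdGaussian d) = 1 := by
  have h := integral_map (φ := fun v : Euc d => v k) (μ := stdGaussian d)
    (measurable_eval_euc k).aemeasurable
    (f := fun t : ℝ => t ^ 2)
    (by exact (continuous_pow 2).aestronglyMeasurable)
  rw [stdGaussian_map_eval k] at h
  rw [← h, integral_sq_gaussianReal]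

lemma integrable_eval_sq_stdGaussian {d : ℕ} (k : Fin d) :
    Integrable (fun v : Euc d => (v k) ^ 2) (stdGaussian d) := by
  have := (integrable_map_measure (f := fun v : Euc d => v k)
    (g := fun t : ℝ => t ^ 2) (μ := stdGaussian d)
    (by rw [stdGaussian_map_eval k]; exact (continuous_pow 2).aestronglyMeasurable)
    (measurable_eval_euc k).aemeasurable)
  rw [stdGaussian_map_eval k] at this
  exact this.mp integrable_sq_gaussianReal

lemma norm_sq_eq_sum {d : ℕ} (v : Euc d) : ‖v‖ ^ 2 = ∑ k, (v k) ^ 2 := by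
  rw [EuclideanSpace.norm_eq, Real.sq_sqrt]
  · congr 1
    funext k
    rw [Real.norm_eq_abs, sq_abs]
  · exact Finset.sum_nonneg fun k _ => by positivity

lemma integrable_norm_sq_stdGaussian {d : ℕ} :
    Integrable (fun v : Euc d => ‖v‖ ^ 2) (stdGaussian d) := by
  have := integrable_finset_sum (μ := stdGaussian d) Finset.univ
    (fun (k : Fin d) _ => integrable_eval_sq_stdGaussian k)
  refine this.congr (Eventually.of_forall fun v => ?_)
  exact (norm_sq_eq_sum v).symm

lemma integral_norm_sq_stdGaussian {d : ℕ} :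
    ∫ v, ‖v‖ ^ 2 ∂(stdGaussian d) = d := by
  have : ∫ v, ‖v‖ ^ 2 ∂(stdGaussian d) = ∫ v, ∑ k, (v k) ^ 2 ∂(stdGaussian d) := by
    congr 1
    funext v
    rw [norm_sq_eq_sum]
  rw [this, integral_finset_sum _ (fun (k : Fin d) _ => integrable_eval_sq_stdGaussian k)]
  simp [integral_eval_sq_stdGaussian]

lemma integrable_norm_stdGaussian {d : ℕ} :
    Integrable (fun v : Euc d => ‖v‖) (stdGaussian d) := by
  refine Integrable.mono' ((integrable_const (1:ℝ)).add integrable_norm_sq_stdGaussian)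
    continuous_norm.aestronglyMeasurable (Eventually.of_forall fun v => ?_)
  rw [Real.norm_eq_abs, abs_of_nonneg (norm_nonneg v)]
  simp only [Pi.add_apply]
  rcases le_or_gt ‖v‖ 1 with h | h
  · have : (0:ℝ) ≤ ‖v‖ ^ 2 := by positivity
    linarith
  · nlinarith [norm_nonneg v]

lemma stdGaussian_ball_pos {d : ℕ} (hd : 1 ≤ d) :
    0 < ((stdGaussian d) {v : Euc d | ‖v‖ ≤ Real.sqrt d / 2}).toReal := by
  have hmeas : MeasurableSet {v : Euc d | ‖v‖ ≤ Real.sqrt d / 2} :=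
    measurableSet_le continuous_norm.measurable measurable_const
  refine ENNReal.toReal_pos ?_ (measure_ne_top _ _)
  rw [_root_.stdGaussian, Measure.map_apply
    (EuclideanSpace.equiv (Fin d) ℝ).symm.continuous.measurable hmeas]
  -- the preimage contains the small cube
  have hsub : (Set.univ.pi fun _ : Fin d => Set.Icc (-(1/2):ℝ) (1/2)) ⊆
      (⇑(EuclideanSpace.equiv (Fin d) ℝ).symm) ⁻¹' {v : Euc d | ‖v‖ ≤ Real.sqrt d / 2} := by
    intro w hw
    simp only [Set.mem_preimage, Set.mem_setOf_eq]
    set v : Euc d := (EuclideanSpace.equiv (Fin d) ℝ).symm w with hv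
    have hvk : ∀ k, v k = w k := fun k => rfl
    have hnsq : ‖v‖ ^ 2 ≤ (d:ℝ) / 4 := by
      rw [norm_sq_eq_sum]
      have : ∀ k : Fin d, (v k) ^ 2 ≤ 1/4 := by
        intro k
        have := hw k (Set.mem_univ k)
        rw [hvk k]
        rcases this with ⟨h1, h2⟩
        nlinarith
      calc ∑ k, (v k) ^ 2 ≤ ∑ _k : Fin d, (1/4 : ℝ) := Finset.sum_le_sum fun k _ => this k
      _ = (d:ℝ) / 4 := by simp; ring
    have hhalf : Real.sqrt ((d:ℝ)/4) = Real.sqrt d / 2 := by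
      rw [show ((d:ℝ)/4) = d * (1/2)^2 by ring, Real.sqrt_mul (Nat.cast_nonneg d),
        Real.sqrt_sq (by norm_num)]
      ring
    calc ‖v‖ = Real.sqrt (‖v‖ ^ 2) := (Real.sqrt_sq (norm_nonneg v)).symm
    _ ≤ Real.sqrt ((d:ℝ)/4) := Real.sqrt_le_sqrt hnsq
    _ = Real.sqrt d / 2 := hhalf
  rw [← pos_iff_ne_zero]
  refine lt_of_lt_of_le ?_
    (measure_mono (μ := Measure.pi fun _ : Fin d => gaussianReal 0 1) hsub)
  rw [Measure.pi_pi]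
  refine CanonicallyOrderedAdd.prod_pos.mpr fun k _ => ?_
  rw [pos_iff_ne_zero]
  intro h0
  have habs := (gaussianReal_absolutelyContinuous' 0 one_ne_zero) h0
  rw [Real.volume_Icc] at habs
  norm_num at habs

lemma integral_norm_stdGaussian_le {d : ℕ} (hd : 1 ≤ d) :
    ∫ v, ‖v‖ ∂(stdGaussian d) ≤ Real.sqrt d
      - ((stdGaussian d) {v : Euc d | ‖v‖ ≤ Real.sqrt d / 2}).toReal * (Real.sqrt d / 8) := by
  set sd : ℝ := Real.sqrt d with hsd
  have hsdpos : 0 < sd := Real.sqrt_pos.mpr (by exact_mod_cast hd)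
  have hsdsq : sd ^ 2 = d := Real.sq_sqrt (Nat.cast_nonneg d)
  set A : Set (Euc d) := {v : Euc d | ‖v‖ ≤ sd / 2} with hA
  have hAmeas : MeasurableSet A := measurableSet_le continuous_norm.measurable measurable_const
  set q : ℝ := ((stdGaussian d) A).toReal with hq
  have hq1 : q ≤ 1 := by
    rw [hq]
    calc ((stdGaussian d) A).toReal ≤ ((stdGaussian d) Set.univ).toReal := by
          exact ENNReal.toReal_mono (measure_ne_top _ _) (measure_mono (Set.subset_univ A))
    _ = 1 := by simp
  have hf2 : Integrable (fun v : Euc d => (sd - ‖v‖) ^ 2 / (2 * sd)) (stdGaussian d) := by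
    have h1 : Integrable (fun v : Euc d => (sd ^ 2 - 2 * sd * ‖v‖ + ‖v‖ ^ 2) / (2 * sd))
        (stdGaussian d) := by
      refine Integrable.div_const ?_ _
      exact ((integrable_const (sd ^ 2)).sub
        (integrable_norm_stdGaussian.const_mul (2 * sd))).add integrable_norm_sq_stdGaussian
    refine h1.congr (Eventually.of_forall fun v => ?_)
    ring
  have hf1 : Integrable (fun v : Euc d => sd / 2 + ‖v‖ ^ 2 / (2 * sd)) (stdGaussian d) :=
    (integrable_const _).add (integrable_norm_sq_stdGaussian.div_const _)
  have hid : ∀ v : Euc d, ‖v‖ = (sd / 2 + ‖v‖ ^ 2 / (2 * sd)) - (sd - ‖v‖) ^ 2 / (2 * sd) := by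
    intro v
    field_simp
    ring
  have hsplit : ∫ v, ‖v‖ ∂(stdGaussian d)
      = (∫ v, (sd / 2 + ‖v‖ ^ 2 / (2 * sd)) ∂(stdGaussian d))
        - ∫ v, (sd - ‖v‖) ^ 2 / (2 * sd) ∂(stdGaussian d) := by
    rw [← integral_sub hf1 hf2]
    congr 1
    funext v
    exact hid v
  have hpart1 : ∫ v, (sd / 2 + ‖v‖ ^ 2 / (2 * sd)) ∂(stdGaussian d) = sd := by
    rw [integral_add (integrable_const _) (integrable_norm_sq_stdGaussian.div_const _),
      integral_const, integral_div, integral_norm_sq_stdGaussian]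
    simp only [probReal_univ, one_smul]
    field_simp
    nlinarith [hsdsq]
  have hpart2 : q * (sd / 8) ≤ ∫ v, (sd - ‖v‖) ^ 2 / (2 * sd) ∂(stdGaussian d) := by
    have hconst : ∫ _v in A, ((d:ℝ)/4) / (2 * sd) ∂(stdGaussian d)
        = q * (((d:ℝ)/4) / (2 * sd)) := by
      rw [setIntegral_const, smul_eq_mul]; rfl
    have hmono : ∫ _v in A, ((d:ℝ)/4) / (2 * sd) ∂(stdGaussian d)
        ≤ ∫ v in A, (sd - ‖v‖) ^ 2 / (2 * sd) ∂(stdGaussian d) := by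
      refine setIntegral_mono_on ((integrableOn_const_iff).mpr (Or.inr (measure_lt_top _ _)))
        hf2.integrableOn hAmeas fun v hv => ?_
      have hvA : ‖v‖ ≤ sd / 2 := hv
      have h1 : sd / 2 ≤ sd - ‖v‖ := by linarith
      have h2 : (sd / 2) ^ 2 ≤ (sd - ‖v‖) ^ 2 := by nlinarith [norm_nonneg v]
      have h3 : ((d:ℝ)/4) ≤ (sd - ‖v‖) ^ 2 := by nlinarith [hsdsq]
      exact div_le_div_of_nonneg_right h3 (by positivity) |>.trans_eq rfl
    have hle : ∫ v in A, (sd - ‖v‖) ^ 2 / (2 * sd) ∂(stdGaussian d)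
        ≤ ∫ v, (sd - ‖v‖) ^ 2 / (2 * sd) ∂(stdGaussian d) := by
      refine setIntegral_le_integral hf2 (Eventually.of_forall fun v => ?_)
      positivity
    have heq : q * (((d:ℝ)/4) / (2 * sd)) = q * (sd / 8) := by
      have : ((d:ℝ)/4) / (2 * sd) = sd / 8 := by
        rw [← hsdsq]
        field_simp
        ring
      rw [this]
    linarith [hconst ▸ hmono, hle]
  rw [hsplit, hpart1]
  linarith

lemma F2_rho {d : ℕ} (hd : 1 ≤ d) (γb1 γb2 : ℝ)
    (hγb1 : γb1 ∈ Set.Ioo (0:ℝ) 1) (hγb2 : 0 ≤ γb2) (hle : γb2 ≤ γb1) :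
    ∃ r : ℝ, r < 1 ∧
      ∫⁻ v, ENNReal.ofReal (1 - γb1 + γb2 * ‖v‖ / Real.sqrt d) ∂(stdGaussian d)
        ≤ ENNReal.ofReal r := by
  set sd : ℝ := Real.sqrt d with hsd
  have hsdpos : 0 < sd := Real.sqrt_pos.mpr (by exact_mod_cast hd)
  set q : ℝ := ((stdGaussian d) {v : Euc d | ‖v‖ ≤ sd / 2}).toReal with hq
  have hqpos : 0 < q := stdGaussian_ball_pos hd
  have hq1 : q ≤ 1 := by
    rw [hq]
    calc ((stdGaussian d) _).toReal ≤ ((stdGaussian d) Set.univ).toReal :=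
          ENNReal.toReal_mono (measure_ne_top _ _) (measure_mono (Set.subset_univ _))
    _ = 1 := by simp
  have hI := integral_norm_stdGaussian_le hd
  refine ⟨1 - γb1 + γb2 * (1 - q / 8), ?_, ?_⟩
  · rcases eq_or_lt_of_le hγb2 with h0 | h0
    · rw [← h0]
      simpa using hγb1.1
    · nlinarith [hγb1.1, hγb1.2, hqpos, hq1]
  · have hψint : Integrable (fun v : Euc d => 1 - γb1 + γb2 * ‖v‖ / sd) (stdGaussian d) := by
      have : Integrable (fun v : Euc d => (1 - γb1) + (γb2 / sd) * ‖v‖) (stdGaussian d) :=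
        (integrable_const _).add (integrable_norm_stdGaussian.const_mul _)
      refine this.congr (Eventually.of_forall fun v => ?_)
      ring
    have hψnn : 0 ≤ᶠ[ae (stdGaussian d)] fun v : Euc d => 1 - γb1 + γb2 * ‖v‖ / sd := by
      refine Eventually.of_forall fun v => ?_
      have h1 : 0 ≤ γb2 * ‖v‖ / sd := by positivity
      have h2 : γb1 < 1 := hγb1.2
      simp only [Pi.zero_apply]
      linarith
    rw [← ofReal_integral_eq_lintegral_ofReal hψint hψnn]
    refine ENNReal.ofReal_le_ofReal ?_
    have hint : ∫ v, (1 - γb1 + γb2 * ‖v‖ / sd) ∂(stdGaussian d)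
        = (1 - γb1) + (γb2 / sd) * ∫ v, ‖v‖ ∂(stdGaussian d) := by
      have heq : (fun v : Euc d => 1 - γb1 + γb2 * ‖v‖ / sd)
          = fun v : Euc d => (1 - γb1) + (γb2 / sd) * ‖v‖ := by
        funext v; ring
      rw [heq, integral_add (integrable_const _) (integrable_norm_stdGaussian.const_mul _),
        integral_const, integral_const_mul]
      simp [measure_univ]
    rw [hint]
    have hmul : (γb2 / sd) * ∫ v, ‖v‖ ∂(stdGaussian d) ≤ (γb2 / sd) * (sd - q * (sd / 8)) :=
      mul_le_mul_of_nonneg_left hI (by positivity)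
    have heq2 : (γb2 / sd) * (sd - q * (sd / 8)) = γb2 * (1 - q / 8) := by
      field_simp
    linarith [heq2 ▸ hmul]

lemma F1_coord {d : ℕ} (γ1 γ2 : ℝ) (x v e : Euc d) (k : Fin d) :
    (F1 γ1 γ2 x v e - v) k = (x - v) k * (1 - γ1 - γ2 * e k) := by
  simp only [F1, hadamard, PiLp.sub_apply, PiLp.add_apply, PiLp.smul_apply, smul_eq_mul]
  ring

lemma F2_step {d : ℕ} (γb1 γb2 : ℝ) (hγb1 : γb1 ≤ 1) (hγb2 : 0 ≤ γb2) (x v e : Euc d) :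
    ‖F2 γb1 γb2 x v e - v‖ ≤ ‖x - v‖ * (1 - γb1 + γb2 * ‖e‖ / Real.sqrt d) := by
  have hrw : F2 γb1 γb2 x v e - v
      = (1 - γb1) • (x - v) + ((γb2 * ‖v - x‖) / Real.sqrt d) • e := by
    rw [F2]
    module
  rw [hrw]
  have hsd : (0:ℝ) ≤ Real.sqrt d := Real.sqrt_nonneg d
  calc ‖(1 - γb1) • (x - v) + ((γb2 * ‖v - x‖) / Real.sqrt d) • e‖
      ≤ ‖(1 - γb1) • (x - v)‖ + ‖((γb2 * ‖v - x‖) / Real.sqrt d) • e‖ := norm_add_le _ _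
    _ = (1 - γb1) * ‖x - v‖ + (γb2 * ‖x - v‖ / Real.sqrt d) * ‖e‖ := by
        rw [norm_smul, norm_smul, Real.norm_eq_abs, Real.norm_eq_abs,
          abs_of_nonneg (by linarith), norm_sub_rev v x,
          abs_of_nonneg (by positivity)]
    _ = ‖x - v‖ * (1 - γb1 + γb2 * ‖e‖ / Real.sqrt d) := by ring

set_option maxHeartbeats 1000000 in
/-- Under condition (B1) — `inf_{α>0} E[|1 − γ¹ + γ²ζ|^α] < 1` for
`ζ ~ N(0,1)`, and `γ̄¹ ≥ γ̄²` — for almost every sample point of the DCBO dynamics,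
either the best objective value `f(p_n)` is strictly decreased infinitely often, or
the sample path converges to some vector `x_∞ ∈ S`. -/
theorem dcbo_converges_or_updates_infinitely_often
    {Ω : Type*} [MeasurableSpace Ω] (P : Measure Ω) [IsProbabilityMeasure P]
    {d N : ℕ} (hd : 1 ≤ d) (hN : 1 ≤ N)
    (f : Euc d → EReal) (hf : Measurable f)
    (S : Set (Euc d)) (hS : S = {y | f y < ⊤}) (hSne : S.Nonempty) (hScl : IsClosed S)
    (γ1 γ2 γb1 γb2 : ℝ)
    (hγ1 : γ1 ∈ Set.Ioo (0:ℝ) 1) (hγ2 : 0 ≤ γ2)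
    (hγb1 : γb1 ∈ Set.Ioo (0:ℝ) 1) (hγb2 : 0 ≤ γb2)
    -- condition (B1): `inf_{α>0} E[|1 − γ¹ + γ²ζ|^α] < 1` and `γ̄¹ ≥ γ̄²`
    (hB1a : sInf {r : ℝ | ∃ α : ℝ, 0 < α ∧
        r = ∫ t, |1 - γ1 + γ2 * t| ^ α ∂(gaussianReal 0 1)} < 1)
    (hB1b : γb2 ≤ γb1)
    (choice : Fin N → Bool)
    (η : ℕ → Fin N → Ω → Euc d)
    (hηmeas : ∀ n i, Measurable (η n i))
    (hηdist : ∀ n i, Measure.map (η n i) P = stdGaussian d)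
    (hηindep : iIndepFun (fun (q : ℕ × Fin N) ω => η q.1 q.2 ω) P)
    (x : ℕ → Fin N → Ω → Euc d)
    (hx0meas : ∀ i, Measurable (x 0 i))
    (hx0S : ∀ i ω, x 0 i ω ∈ S)
    -- the noises are independent of the initial positions
    (hindep0 : Indep (⨆ i : Fin N, MeasurableSpace.comap (x 0 i) inferInstance)
        (⨆ (n : ℕ) (i : Fin N), MeasurableSpace.comap (η n i) inferInstance) P)
    (p : ℕ → Ω → Euc d) (ι : ℕ → Ω → Fin N)
    (hp : ∀ n ω, p n ω = x n (ι n ω) ω)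
    (hmin : ∀ n ω j, f (x n (ι n ω) ω) ≤ f (x n j ω))
    (htie : ∀ n ω j, f (x n j ω) = f (x n (ι n ω) ω) → ι n ω ≤ j)
    (hrec : ∀ n i ω, x (n + 1) i ω =
      if choice i then F1 γ1 γ2 (x n i ω) (p n ω) (η n i ω)
      else F2 γb1 γb2 (x n i ω) (p n ω) (η n i ω)) :
    ∀ᵐ ω ∂P,
      {n : ℕ | f (p (n + 1) ω) < f (p n ω)}.Infinite ∨
      ∃ xLim ∈ S, ∀ i : Fin N,
        Tendsto (fun n => ‖x n i ω - xLim‖) atTop (nhds 0) := by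
  classical
  obtain ⟨α, hαpos, hαlt⟩ := exists_alpha_lt_one γ1 γ2 hB1a
  obtain ⟨r2, hr2lt, hr2int⟩ := F2_rho hd γb1 γb2 hγb1 hγb2 hB1b
  have hφ1meas : ∀ k : Fin d,
      Measurable fun w : Euc d => ENNReal.ofReal (|1 - γ1 - γ2 * w k| ^ α) := by
    intro k
    have h2 : (fun w : Euc d => |1 - γ1 - γ2 * w k| ^ α)
        = (fun t : ℝ => |1 - γ1 + (-γ2) * t| ^ α) ∘ fun w : Euc d => w k := by
      funext w
      simp only [Function.comp_apply]
      have h3 : 1 - γ1 - γ2 * w k = 1 - γ1 + (-γ2) * w k := by ring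
      rw [h3]
    exact ENNReal.measurable_ofReal.comp
      (h2 ▸ ((continuous_abs_rpow (1 - γ1) (-γ2) α hαpos.le).measurable.comp
        (measurable_eval_euc k)))
  have hφ2meas : Measurable fun w : Euc d =>
      ENNReal.ofReal (1 - γb1 + γb2 * ‖w‖ / Real.sqrt d) :=
    ENNReal.measurable_ofReal.comp
      (continuous_const.add ((continuous_const.mul continuous_norm).div_const _)).measurable
  have hg1 : ∀ᵐ ω ∂P, ∀ (n₁ : ℕ) (i : Fin N) (k : Fin d),
      Tendsto (fun n => ∏ m ∈ Finset.Ico n₁ n,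
        ENNReal.ofReal (|1 - γ1 - γ2 * η m i ω k| ^ α)) atTop (𝓝 0) := by
    rw [ae_all_iff]
    intro n₁
    rw [ae_all_iff]
    intro i
    rw [ae_all_iff]
    intro k
    exact aux_prod_tendsto_zero P η hηmeas hηdist hηindep i n₁
      (fun w : Euc d => ENNReal.ofReal (|1 - γ1 - γ2 * w k| ^ α)) (hφ1meas k)
      (ENNReal.ofReal (∫ t, |1 - γ1 + γ2 * t| ^ α ∂(gaussianReal 0 1)))
      (ENNReal.ofReal_lt_one.mpr hαlt)
      (le_of_eq (F1_lintegral_eq k γ1 γ2 hαpos))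
  have hg2 : ∀ᵐ ω ∂P, ∀ (n₁ : ℕ) (i : Fin N),
      Tendsto (fun n => ∏ m ∈ Finset.Ico n₁ n,
        ENNReal.ofReal (1 - γb1 + γb2 * ‖η m i ω‖ / Real.sqrt d)) atTop (𝓝 0) := by
    rw [ae_all_iff]
    intro n₁
    rw [ae_all_iff]
    intro i
    exact aux_prod_tendsto_zero P η hηmeas hηdist hηindep i n₁
      (fun w : Euc d => ENNReal.ofReal (1 - γb1 + γb2 * ‖w‖ / Real.sqrt d)) hφ2meas
      (ENNReal.ofReal r2) (ENNReal.ofReal_lt_one.mpr hr2lt) hr2int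
  filter_upwards [hg1, hg2] with ω hω1 hω2
  by_cases hinf : {n : ℕ | f (p (n + 1) ω) < f (p n ω)}.Infinite
  · exact Or.inl hinf
  right
  have hstep : ∀ n, x (n + 1) (ι n ω) ω = p n ω := by
    intro n
    have hxp : x n (ι n ω) ω = p n ω := (hp n ω).symm
    rw [hrec n (ι n ω) ω, hxp]
    by_cases hc : choice (ι n ω) = true <;> simp [hc, F1_fix, F2_fix]
  have hdec : ∀ n, f (p (n + 1) ω) ≤ f (p n ω) := by
    intro n
    calc f (p (n + 1) ω) = f (x (n + 1) (ι (n + 1) ω) ω) := by rw [hp]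
      _ ≤ f (x (n + 1) (ι n ω) ω) := hmin (n + 1) ω (ι n ω)
      _ = f (p n ω) := by rw [hstep n]
  obtain ⟨n₀, hn₀⟩ : ∃ n₀, ∀ n, n₀ ≤ n → ¬ f (p (n + 1) ω) < f (p n ω) := by
    obtain ⟨b, hb⟩ := (Set.not_infinite.mp hinf).bddAbove
    refine ⟨b + 1, fun n hn hlt => ?_⟩
    have := hb hlt
    omega
  have heq : ∀ n, n₀ ≤ n → f (p (n + 1) ω) = f (p n ω) := fun n hn =>
    le_antisymm (hdec n) (not_lt.mp (hn₀ n hn))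
  have hιmono : ∀ n, n₀ ≤ n → ι (n + 1) ω ≤ ι n ω := by
    intro n hn
    refine htie (n + 1) ω (ι n ω) ?_
    rw [hstep n, ← hp (n + 1) ω, heq n hn]
  obtain ⟨j₁, hj₁⟩ := antitone_nat_eventually_constant (fun j => (ι (n₀ + j) ω : ℕ))
    (fun j => hιmono (n₀ + j) (Nat.le_add_right _ _))
  set n₁ := n₀ + j₁ with hn₁def
  have hιconst : ∀ n, n₁ ≤ n → ι n ω = ι n₁ ω := by
    intro n hn
    have h1 : n = n₀ + (j₁ + (n - n₁)) := by omega
    have h2 := hj₁ (j₁ + (n - n₁)) (Nat.le_add_right _ _)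
    apply Fin.ext
    rw [h1]
    exact h2
  have hpconst : ∀ n, n₁ ≤ n → p n ω = p n₁ ω := by
    intro n hn
    induction n, hn using Nat.le_induction with
    | base => rfl
    | succ n hn ih =>
      have h1 : p (n + 1) ω = x (n + 1) (ι (n + 1) ω) ω := hp _ _
      rw [h1, hιconst (n + 1) (by omega), ← hιconst n hn, hstep n, ih]
  set v := p n₁ ω with hvdef
  have hvS : v ∈ S := by
    rw [hS]
    have hchain : ∀ n, f (p n ω) ≤ f (p 0 ω) := by
      intro n
      induction n with
      | zero => exact le_refl _
      | succ n ih => exact (hdec n).trans ih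
    have h0 : f (p 0 ω) < ⊤ := by
      have h1 := hx0S (ι 0 ω) ω
      rw [hS] at h1
      rw [hp 0 ω]
      exact h1
    exact lt_of_le_of_lt (hchain n₁) h0
  refine ⟨v, hvS, fun i => ?_⟩
  by_cases hci : choice i = true
  · -- anisotropic agent
    have hrecF : ∀ n, n₁ ≤ n → x (n + 1) i ω = F1 γ1 γ2 (x n i ω) v (η n i ω) := by
      intro n hn
      rw [hrec n i ω, if_pos hci, hpconst n hn]
    have hcoord : ∀ k : Fin d, ∀ j : ℕ,
        |(x (n₁ + j) i ω - v) k| = |(x n₁ i ω - v) k|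
          * ∏ m ∈ Finset.Ico n₁ (n₁ + j), |1 - γ1 - γ2 * η m i ω k| := by
      intro k j
      induction j with
      | zero => simp
      | succ j ih =>
        have hsucc : x (n₁ + (j + 1)) i ω = F1 γ1 γ2 (x (n₁ + j) i ω) v (η (n₁ + j) i ω) :=
          hrecF (n₁ + j) (Nat.le_add_right _ _)
        calc |(x (n₁ + (j + 1)) i ω - v) k|
            = |(x (n₁ + j) i ω - v) k| * |1 - γ1 - γ2 * η (n₁ + j) i ω k| := by
              rw [hsucc, F1_coord, abs_mul]
          _ = |(x n₁ i ω - v) k|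
              * ∏ m ∈ Finset.Ico n₁ (n₁ + (j + 1)), |1 - γ1 - γ2 * η m i ω k| := by
              rw [show n₁ + (j + 1) = (n₁ + j) + 1 from rfl,
                Finset.prod_Ico_succ_top (Nat.le_add_right _ _), ih]
              ring
    have hktend : ∀ k : Fin d, Tendsto (fun n => |(x n i ω - v) k|) atTop (𝓝 0) := by
      intro k
      have hQ := real_prod_tendsto_zero (c := fun m => |1 - γ1 - γ2 * η m i ω k|)
        (fun m => abs_nonneg _) hαpos n₁ (hω1 n₁ i k)
      have h2 : Tendsto (fun n => |(x n₁ i ω - v) k|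
          * ∏ m ∈ Finset.Ico n₁ n, |1 - γ1 - γ2 * η m i ω k|) atTop (𝓝 0) := by
        have h3 := hQ.const_mul (|(x n₁ i ω - v) k|)
        simpa using h3
      refine Tendsto.congr' ?_ h2
      filter_upwards [eventually_ge_atTop n₁] with n hn
      have h4 : n₁ + (n - n₁) = n := by omega
      have h5 := hcoord k (n - n₁)
      rw [h4] at h5
      exact h5.symm
    have hsum : Tendsto (fun n => ∑ k : Fin d, |(x n i ω - v) k| ^ 2) atTop (𝓝 0) := by
      have h6 := tendsto_finset_sum (Finset.univ : Finset (Fin d))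
        (fun k _ => ((hktend k).mul (hktend k)))
      simp only [mul_zero, Finset.sum_const_zero] at h6
      refine h6.congr fun n => ?_
      exact Finset.sum_congr rfl fun k _ => (pow_two _).symm
    have hs := (Real.continuous_sqrt.tendsto 0).comp hsum
    rw [Real.sqrt_zero] at hs
    refine hs.congr fun n => ?_
    rw [Function.comp_apply, EuclideanSpace.norm_eq]
    congr 1
  · -- isotropic agent
    have hrecF : ∀ n, n₁ ≤ n → x (n + 1) i ω = F2 γb1 γb2 (x n i ω) v (η n i ω) := by
      intro n hn
      rw [hrec n i ω, if_neg hci, hpconst n hn]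
    have hfac0 : ∀ m : ℕ, 0 ≤ 1 - γb1 + γb2 * ‖η m i ω‖ / Real.sqrt d := by
      intro m
      have h1 : 0 ≤ γb2 * ‖η m i ω‖ / Real.sqrt d := by positivity
      have h2 := hγb1.2
      linarith
    have hbound : ∀ j : ℕ, ‖x (n₁ + j) i ω - v‖ ≤ ‖x n₁ i ω - v‖
        * ∏ m ∈ Finset.Ico n₁ (n₁ + j), (1 - γb1 + γb2 * ‖η m i ω‖ / Real.sqrt d) := by
      intro j
      induction j with
      | zero => simp
      | succ j ih =>
        have hsucc : x (n₁ + (j + 1)) i ω = F2 γb1 γb2 (x (n₁ + j) i ω) v (η (n₁ + j) i ω) :=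
          hrecF (n₁ + j) (Nat.le_add_right _ _)
        calc ‖x (n₁ + (j + 1)) i ω - v‖
            ≤ ‖x (n₁ + j) i ω - v‖ * (1 - γb1 + γb2 * ‖η (n₁ + j) i ω‖ / Real.sqrt d) := by
              rw [hsucc]
              exact F2_step γb1 γb2 hγb1.2.le hγb2 _ _ _
          _ ≤ (‖x n₁ i ω - v‖
              * ∏ m ∈ Finset.Ico n₁ (n₁ + j), (1 - γb1 + γb2 * ‖η m i ω‖ / Real.sqrt d))
              * (1 - γb1 + γb2 * ‖η (n₁ + j) i ω‖ / Real.sqrt d) :=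
              mul_le_mul_of_nonneg_right ih (hfac0 _)
          _ = ‖x n₁ i ω - v‖
              * ∏ m ∈ Finset.Ico n₁ (n₁ + (j + 1)),
                (1 - γb1 + γb2 * ‖η m i ω‖ / Real.sqrt d) := by
              rw [show n₁ + (j + 1) = (n₁ + j) + 1 from rfl,
                Finset.prod_Ico_succ_top (Nat.le_add_right _ _)]
              ring
    have hQ : Tendsto (fun n => ∏ m ∈ Finset.Ico n₁ n,
        (1 - γb1 + γb2 * ‖η m i ω‖ / Real.sqrt d)) atTop (𝓝 0) := by
      refine real_prod_tendsto_zero (fun m => hfac0 m) one_pos n₁ ?_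
      refine (hω2 n₁ i).congr fun n => ?_
      exact Finset.prod_congr rfl fun m _ => by rw [Real.rpow_one]
    have h2 := hQ.const_mul (‖x n₁ i ω - v‖)
    rw [mul_zero] at h2
    refine squeeze_zero' (Eventually.of_forall fun n => norm_nonneg _) ?_ h2
    filter_upwards [eventually_ge_atTop n₁] with n hn
    have h4 : n₁ + (n - n₁) = n := by omega
    have h5 := hbound (n - n₁)
    rw [h4] at h5
    exact h5
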